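/- Let (X, 𝓑) be a tree-like ball space (i.e., for all B₁, B₂ ∈ 𝓑, if B₁ ∩ B₂ ≠ ∅ then B₁ ⊆ B₂ or B₂ ⊆ B₁). Then the ball space (X, ci(𝓑)) is again tree-like, where ci(𝓑) is the collection of all nonempty intersections of nonempty chains (under inclusion) of members of 𝓑. -/
import Mathlib


/-- `ci 𝓑` is the collection of all nonempty intersections of nonempty
inclusion-chains of members of `𝓑`. -/
def ci {X : Type*} (B : Set (Set X)) : Set (Set X) :=
  {I | I.Nonempty ∧ ∃ C ⊆ B, C.Nonempty ∧ IsChain (· ⊆ ·) C ∧ I = ⋂₀ C}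

/-- If `(X, 𝓑)` is a tree-like ball space, then `(X, ci 𝓑)` is tree-like. -/
theorem treelike_ci {X : Type*} [Nonempty X] (B : Set (Set X))
    (hBne : B.Nonempty) (hball : ∀ b ∈ B, b.Nonempty)
    (htree : ∀ b₁ ∈ B, ∀ b₂ ∈ B, (b₁ ∩ b₂).Nonempty → b₁ ⊆ b₂ ∨ b₂ ⊆ b₁) :
    ∀ b₁ ∈ ci B, ∀ b₂ ∈ ci B, (b₁ ∩ b₂).Nonempty → b₁ ⊆ b₂ ∨ b₂ ⊆ b₁ := by
  rintro b₁ ⟨-, C₁, hC₁B, -, -, rfl⟩ b₂ ⟨-, C₂, hC₂B, -, -, rfl⟩ ⟨x, hx₁, hx₂⟩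
  simp only [Set.mem_sInter] at hx₁ hx₂
  by_cases h : ∀ c₂ ∈ C₂, ∃ c₁ ∈ C₁, c₁ ⊆ c₂
  · left
    intro y hy
    refine Set.mem_sInter.2 fun c₂ hc₂ => ?_
    obtain ⟨c₁, hc₁, hsub⟩ := h c₂ hc₂
    exact hsub (Set.mem_sInter.1 hy c₁ hc₁)
  · right
    push_neg at h
    obtain ⟨c₂, hc₂, hno⟩ := h
    have hsub : c₂ ⊆ ⋂₀ C₁ := by
      refine Set.subset_sInter fun c₁ hc₁ => ?_
      rcases htree c₁ (hC₁B hc₁) c₂ (hC₂B hc₂) ⟨x, hx₁ c₁ hc₁, hx₂ c₂ hc₂⟩ with h' | h'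
      · exact absurd h' (hno c₁ hc₁)
      · exact h'
    exact (Set.sInter_subset_of_mem hc₂).trans hsub
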